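/- (Countability of uncovered times) Fix constants b > 0 and Λ > 0, and for (t₀, x₀) ∈ ℝ⁺ × ℝ let T(t₀, x₀) := {(t,x) : |x − x₀| < b − Λ(t − t₀), 0 < t − t₀ < b/Λ} be the open forward triangle with vertex base at (t₀, x₀). Let C' ⊆ ℝ⁺ × ℝ be a set such that for every (t',x') ∈ C' the triangle T(t',x') is disjoint from C'. Then for every compact K ⊂ ℝ⁺ × ℝ the set {τ ∈ ℝ⁺ : ({τ} × ℝ) ∩ C' ∩ K ≠ ∅} is finite; consequently {τ ∈ ℝ⁺ : ({τ} × ℝ) ∩ C' ≠ ∅} is at most countable. -/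

import Mathlib

open Set

/-- **Countability of uncovered times** (covering lemma in the proof of Theorem 1.2):
fix `b > 0` and `Λ > 0` and let `T(t₀,x₀)` be the open forward triangle
`{(t,x) : |x-x₀| < b - Λ(t-t₀), 0 < t-t₀ < b/Λ}`. If `C' ⊆ ℝ⁺ × ℝ` is such that for
every `(t',x') ∈ C'` the triangle `T(t',x')` is disjoint from `C'`, then for every
compact `K` the set of times `τ` at which `({τ} × ℝ) ∩ C' ∩ K` is nonempty is finite;
consequently the set of times carrying points of `C'` is at most countable. -/
theorem countability_of_uncovered_times
    (b Λ : ℝ) (hb : 0 < b) (hΛ : 0 < Λ)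
    (T : ℝ × ℝ → Set (ℝ × ℝ))
    (hT : ∀ p : ℝ × ℝ, T p =
      {q : ℝ × ℝ | |q.2 - p.2| < b - Λ * (q.1 - p.1) ∧ 0 < q.1 - p.1 ∧ q.1 - p.1 < b / Λ})
    (C' : Set (ℝ × ℝ)) (hC' : C' ⊆ Ioi (0 : ℝ) ×ˢ (univ : Set ℝ))
    (hdisj : ∀ p ∈ C', T p ∩ C' = ∅) :
    (∀ K : Set (ℝ × ℝ), IsCompact K →
        {τ : ℝ | (({τ} ×ˢ (univ : Set ℝ)) ∩ C' ∩ K).Nonempty}.Finite) ∧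
      {τ : ℝ | (({τ} ×ˢ (univ : Set ℝ)) ∩ C').Nonempty}.Countable := by
  have key : ∀ K : Set (ℝ × ℝ), IsCompact K →
      {τ : ℝ | (({τ} ×ˢ (univ : Set ℝ)) ∩ C' ∩ K).Nonempty}.Finite := by
    intro K hK
    set S := {τ : ℝ | (({τ} ×ˢ (univ : Set ℝ)) ∩ C' ∩ K).Nonempty} with hS
    have hpt : ∀ τ ∈ S, ∃ p : ℝ × ℝ, p ∈ C' ∧ p ∈ K ∧ p.1 = τ := by
      intro τ hτ
      obtain ⟨q, ⟨⟨hq1, _⟩, hq2⟩, hq3⟩ := hτ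
      exact ⟨q, hq2, hq3, hq1⟩
    choose! p hpC hpK hpτ using hpt
    set ε := min (b / (4 * Λ)) (b / 4) with hεdef
    have hεpos : 0 < ε := lt_min (by positivity) (by positivity)
    obtain ⟨t, htfin, hcover⟩ := (Metric.totallyBounded_iff.mp hK.totallyBounded) ε hεpos
    have hc : ∀ τ ∈ S, ∃ v ∈ t, p τ ∈ Metric.ball v ε := by
      intro τ hτ
      have := hcover (hpK τ hτ)
      simpa using this
    choose! c hct hcball using hc
    -- the key contradiction: two distinct times cannot share a ball
    have hmain : ∀ τ₁ ∈ S, ∀ τ₂ ∈ S, τ₁ < τ₂ → c τ₁ ≠ c τ₂ := by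
      intro τ₁ h₁ τ₂ h₂ hlt hcc
      have hb1 := hcball τ₁ h₁
      have hb2 := hcball τ₂ h₂
      rw [hcc] at hb1
      have hdist : dist (p τ₁) (p τ₂) < 2 * ε := by
        calc dist (p τ₁) (p τ₂) ≤ dist (p τ₁) (c τ₂) + dist (c τ₂) (p τ₂) :=
              dist_triangle _ _ _
          _ < ε + ε := by
              have ha := Metric.mem_ball.mp hb1
              have hbb := Metric.mem_ball.mp hb2
              rw [dist_comm] at hbb
              linarith
          _ = 2 * ε := by ring
      have hdt : |(p τ₂).1 - (p τ₁).1| < 2 * ε := by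
        have h1 : dist (p τ₁).1 (p τ₂).1 ≤ dist (p τ₁) (p τ₂) := le_max_left _ _
        rw [Real.dist_eq] at h1
        rw [abs_sub_comm]
        linarith
      have hdx : |(p τ₂).2 - (p τ₁).2| < 2 * ε := by
        have h1 : dist (p τ₁).2 (p τ₂).2 ≤ dist (p τ₁) (p τ₂) := le_max_right _ _
        rw [Real.dist_eq] at h1
        rw [abs_sub_comm]
        linarith
      have hτdiff : (p τ₂).1 - (p τ₁).1 = τ₂ - τ₁ := by
        rw [hpτ τ₁ h₁, hpτ τ₂ h₂]
      have hpos : 0 < (p τ₂).1 - (p τ₁).1 := by rw [hτdiff]; linarith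
      have hdt' : (p τ₂).1 - (p τ₁).1 < 2 * ε := lt_of_le_of_lt (le_abs_self _) hdt
      have hε1 : 2 * ε ≤ b / (2 * Λ) := by
        have h : ε ≤ b / (4 * Λ) := min_le_left _ _
        have : b / (2 * Λ) = 2 * (b / (4 * Λ)) := by field_simp; ring
        linarith
      have hε2 : 2 * ε ≤ b / 2 := by
        have : ε ≤ b / 4 := min_le_right _ _
        linarith
      have hΛdt : Λ * ((p τ₂).1 - (p τ₁).1) < b / 2 := by
        have : Λ * ((p τ₂).1 - (p τ₁).1) < Λ * (2 * ε) := by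
          exact (mul_lt_mul_iff_right₀ hΛ).mpr hdt'
        have h2 : Λ * (2 * ε) ≤ Λ * (b / (2 * Λ)) := by
          exact (mul_le_mul_iff_right₀ hΛ).mpr hε1
        have h3 : Λ * (b / (2 * Λ)) = b / 2 := by
          field_simp
        linarith
      have hmem : p τ₂ ∈ T (p τ₁) := by
        rw [hT]
        refine ⟨?_, hpos, ?_⟩
        · calc |(p τ₂).2 - (p τ₁).2| < 2 * ε := hdx
            _ ≤ b / 2 := hε2
            _ < b - Λ * ((p τ₂).1 - (p τ₁).1) := by linarith
        · calc (p τ₂).1 - (p τ₁).1 < 2 * ε := hdt'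
            _ ≤ b / (2 * Λ) := hε1
            _ < b / Λ := by
              rw [div_lt_div_iff₀ (by positivity) hΛ]
              nlinarith
      have : p τ₂ ∈ T (p τ₁) ∩ C' := ⟨hmem, hpC τ₂ h₂⟩
      rw [hdisj (p τ₁) (hpC τ₁ h₁)] at this
      exact this
    have hinj : InjOn c S := by
      intro τ₁ h₁ τ₂ h₂ hcc
      by_contra hne
      rcases lt_or_gt_of_ne hne with h | h
      · exact hmain τ₁ h₁ τ₂ h₂ h hcc
      · exact hmain τ₂ h₂ τ₁ h₁ h hcc.symm
    exact Set.Finite.of_finite_image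
      (htfin.subset (Set.image_subset_iff.mpr fun τ hτ => hct τ hτ)) hinj
  refine ⟨key, ?_⟩
  have hcover : {τ : ℝ | (({τ} ×ˢ (univ : Set ℝ)) ∩ C').Nonempty} ⊆
      ⋃ n : ℕ, {τ : ℝ | (({τ} ×ˢ (univ : Set ℝ)) ∩ C' ∩
        (Icc (1 / (n + 1) : ℝ) (n + 1) ×ˢ Icc (-(n + 1) : ℝ) (n + 1))).Nonempty} := by
    intro τ hτ
    obtain ⟨q, ⟨hq1, _⟩, hq2⟩ := hτ
    have hqpos : 0 < q.1 := (hC' hq2).1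
    obtain ⟨n, hn⟩ := exists_nat_ge (max (1 / q.1) (max q.1 |q.2|))
    have hn1 : 1 / q.1 ≤ n := le_trans (le_max_left _ _) hn
    have hn2 : q.1 ≤ n := le_trans (le_trans (le_max_left _ _) (le_max_right _ _)) hn
    have hn3 : |q.2| ≤ n := le_trans (le_trans (le_max_right _ _) (le_max_right _ _)) hn
    refine Set.mem_iUnion.mpr ⟨n, ⟨q, ⟨⟨hq1, trivial⟩, hq2⟩, ?_⟩⟩
    constructor
    · constructor
      · rw [div_le_iff₀ (by positivity)]
        have : 1 ≤ q.1 * (1 / q.1 + 1) := by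
          rw [mul_add, mul_one_div, div_self (ne_of_gt hqpos)]
          linarith
        calc (1 : ℝ) ≤ q.1 * (1/q.1 + 1) := this
          _ ≤ q.1 * (n + 1) := by
            apply mul_le_mul_of_nonneg_left _ hqpos.le
            linarith
      · linarith
    · have := abs_le.mp hn3
      exact ⟨by linarith [this.1], by linarith [this.2]⟩
  refine Set.Countable.mono hcover ?_
  exact Set.countable_iUnion fun n => (key _ ((isCompact_Icc).prod isCompact_Icc)).countable
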